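/- For any finite alphabet Σ and any frame n : Σ → ℕ defined on all of Σ, the graph Γ_n on vertex set PBA_n is connected, where p, p' ∈ PBA_n are adjacent if and only if they differ on exactly two characters α and β and both irr(p) and irr(p') lie in {none, α, β}. -/

import Mathlib

/-- `p` is a probability distribution on the finite alphabet `α`. -/
def IsProbDist {α : Type*} [Fintype α] (p : α → ℝ) : Prop :=
  (∀ σ, 0 ≤ p σ) ∧ ∑ σ, p σ = 1

/-- `x` is one of the two binary values `2 ^ (−n σ)`, `2 ^ (−(n σ − 1))` allowed at `σ`. -/
def BinaryVal {α : Type*} (n : α → ℕ) (σ : α) (x : ℝ) : Prop :=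
  x = (2 : ℝ) ^ (-(n σ : ℤ)) ∨ x = (2 : ℝ) ^ (-((n σ : ℤ) - 1))

/-- `Π_n`: probability distributions `p` on `α` with
`2 ^ (−n σ) ≤ p σ ≤ 2 ^ (−(n σ − 1))` for every `σ`. -/
def PiN {α : Type*} [Fintype α] (n : α → ℕ) : Set (α → ℝ) :=
  {p | IsProbDist p ∧
    ∀ σ, (2 : ℝ) ^ (-(n σ : ℤ)) ≤ p σ ∧ p σ ≤ (2 : ℝ) ^ (-((n σ : ℤ) - 1))}

/-- `PBA_n`: pseudo-binary approximations for the frame `n`. -/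
def PBA {α : Type*} [Fintype α] (n : α → ℕ) : Set (α → ℝ) :=
  {p | p ∈ PiN n ∧
    ∀ σ τ : α, ¬ BinaryVal n σ (p σ) → ¬ BinaryVal n τ (p τ) → σ = τ}

/-- Adjacency in the graph `Γ_n` on `PBA_n`: `p` and `q` are both pseudo-binary approximations,
they differ on exactly the two characters `α₀ ≠ β₀`, and both exceptional characters `irr p`,
`irr q` lie in `{none, α₀, β₀}` — equivalently, both `p` and `q` take binary values at every
character outside `{α₀, β₀}`. -/
def GammaAdj {α : Type*} [Fintype α] (n : α → ℕ) (p q : α → ℝ) : Prop :=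
  p ∈ PBA n ∧ q ∈ PBA n ∧
    ∃ α₀ β₀ : α, α₀ ≠ β₀ ∧ {σ | p σ ≠ q σ} = {α₀, β₀} ∧
      (∀ σ, σ ≠ α₀ → σ ≠ β₀ → BinaryVal n σ (p σ)) ∧
      (∀ σ, σ ≠ α₀ → σ ≠ β₀ → BinaryVal n σ (q σ))

set_option linter.unusedSectionVars false

section GammaProof
open Finset
open scoped Classical

variable {α : Type*} [Fintype α]

private noncomputable def lo (n : α → ℕ) (σ : α) : ℝ := (2:ℝ) ^ (-(n σ : ℤ))
private noncomputable def hi (n : α → ℕ) (σ : α) : ℝ := (2:ℝ) ^ (-((n σ : ℤ) - 1))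

private lemma binval_iff (n : α → ℕ) (σ : α) (x : ℝ) :
    BinaryVal n σ x ↔ x = lo n σ ∨ x = hi n σ := Iff.rfl

private lemma lo_pos (n : α → ℕ) (σ : α) : 0 < lo n σ := zpow_pos (by norm_num) _

private lemma hi_eq (n : α → ℕ) (σ : α) : hi n σ = 2 * lo n σ := by
  unfold hi lo
  rw [show -((n σ : ℤ) - 1) = 1 + -(n σ:ℤ) by ring, zpow_add₀ (by norm_num : (2:ℝ) ≠ 0)]
  norm_num

private lemma lo_lt_hi (n : α → ℕ) (σ : α) : lo n σ < hi n σ := by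
  have := lo_pos n σ; rw [hi_eq]; linarith

private noncomputable def NN (n : α → ℕ) : ℕ := Finset.univ.sup n

private def gr (n : α → ℕ) (x : ℝ) : Prop := ∃ k : ℤ, x = (k:ℝ) * (2:ℝ) ^ (-(NN n : ℤ))

private lemma gr_zero (n : α → ℕ) : gr n 0 := ⟨0, by norm_num⟩
private lemma gr_add {n : α → ℕ} {x y : ℝ} (hx : gr n x) (hy : gr n y) : gr n (x + y) := by
  obtain ⟨k, rfl⟩ := hx; obtain ⟨l, rfl⟩ := hy; exact ⟨k + l, by push_cast; ring⟩
private lemma gr_sub {n : α → ℕ} {x y : ℝ} (hx : gr n x) (hy : gr n y) : gr n (x - y) := by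
  obtain ⟨k, rfl⟩ := hx; obtain ⟨l, rfl⟩ := hy; exact ⟨k - l, by push_cast; ring⟩
private lemma gr_min {n : α → ℕ} {x y : ℝ} (hx : gr n x) (hy : gr n y) : gr n (min x y) := by
  rcases le_total x y with h | h
  · rwa [min_eq_left h]
  · rwa [min_eq_right h]
private lemma gr_one (n : α → ℕ) : gr n 1 := by
  refine ⟨2 ^ (NN n), ?_⟩
  push_cast
  rw [← zpow_natCast (2:ℝ) (NN n), ← zpow_add₀ (by norm_num : (2:ℝ) ≠ 0)]
  norm_num
private lemma gr_lo (n : α → ℕ) (σ : α) : gr n (lo n σ) := by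
  have h : n σ ≤ NN n := Finset.le_sup (Finset.mem_univ σ)
  refine ⟨2 ^ (NN n - n σ), ?_⟩
  push_cast
  rw [← zpow_natCast (2:ℝ) (NN n - n σ), ← zpow_add₀ (by norm_num : (2:ℝ) ≠ 0)]
  unfold lo
  congr 1
  omega
private lemma gr_hi (n : α → ℕ) (σ : α) : gr n (hi n σ) := by
  rw [hi_eq, two_mul]; exact gr_add (gr_lo n σ) (gr_lo n σ)
private lemma gr_bin {n : α → ℕ} {σ : α} {x : ℝ} (h : BinaryVal n σ x) : gr n x := by
  rcases h with h | h
  · rw [h]; exact gr_lo n σ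
  · rw [h]; exact gr_hi n σ
private lemma gr_ge {n : α → ℕ} {x : ℝ} (hx : gr n x) (hpos : 0 < x) :
    (2:ℝ) ^ (-(NN n : ℤ)) ≤ x := by
  obtain ⟨k, rfl⟩ := hx
  have hc : (0:ℝ) < (2:ℝ) ^ (-(NN n : ℤ)) := zpow_pos (by norm_num) _
  have hk : (0:ℝ) < (k:ℝ) := by nlinarith
  have hk1 : (1:ℤ) ≤ k := by exact_mod_cast hk
  have hk1' : (1:ℝ) ≤ (k:ℝ) := by exact_mod_cast hk1
  nlinarith
private lemma gr_sum {n : α → ℕ} {s : Finset α} {f : α → ℝ} (h : ∀ i ∈ s, gr n (f i)) :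
    gr n (∑ i ∈ s, f i) :=
  Finset.sum_induction f (gr n) (fun _ _ => gr_add) (gr_zero n) h


private lemma pba_lo {n : α → ℕ} {p : α → ℝ} (hp : p ∈ PBA n) (σ : α) : lo n σ ≤ p σ :=
  (hp.1.2 σ).1
private lemma pba_hi {n : α → ℕ} {p : α → ℝ} (hp : p ∈ PBA n) (σ : α) : p σ ≤ hi n σ :=
  (hp.1.2 σ).2
private lemma pba_sum {n : α → ℕ} {p : α → ℝ} (hp : p ∈ PBA n) : ∑ σ, p σ = 1 :=
  hp.1.1.2

private lemma pba_grid {n : α → ℕ} {p : α → ℝ} (hp : p ∈ PBA n) (σ : α) : gr n (p σ) := by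
  by_cases hb : BinaryVal n σ (p σ)
  · exact gr_bin hb
  · have hbin : ∀ τ ∈ Finset.univ.erase σ, gr n (p τ) := by
      intro τ hτ
      have hτσ : τ ≠ σ := (Finset.mem_erase.mp hτ).1
      by_cases hbτ : BinaryVal n τ (p τ)
      · exact gr_bin hbτ
      · exact absurd (hp.2 τ σ hbτ hb) hτσ
    have hsum : p σ + ∑ τ ∈ Finset.univ.erase σ, p τ = 1 := by
      rw [Finset.add_sum_erase _ _ (Finset.mem_univ σ)]
      exact pba_sum hp
    have : p σ = 1 - ∑ τ ∈ Finset.univ.erase σ, p τ := by linarith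
    rw [this]
    exact gr_sub (gr_one n) (gr_sum hbin)

private lemma sum_pair_diff {f g : α → ℝ} {a b : α} (hab : a ≠ b)
    (h : ∀ σ, σ ≠ a → σ ≠ b → f σ = g σ) :
    ∑ σ, f σ = ∑ σ, g σ + ((f a - g a) + (f b - g b)) := by
  have h1 : ∑ σ ∈ ({a, b} : Finset α), (f σ - g σ) = ∑ σ, (f σ - g σ) := by
    apply Finset.sum_subset (Finset.subset_univ _)
    intro x _ hx
    simp only [Finset.mem_insert, Finset.mem_singleton] at hx
    push_neg at hx
    rw [h x hx.1 hx.2]; ring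
  rw [Finset.sum_pair hab] at h1
  have h2 : ∑ σ, (f σ - g σ) = ∑ σ, f σ - ∑ σ, g σ := Finset.sum_sub_distrib _ _
  linarith

/-- The basic move: shift `δ` of mass from `a` to `b`. -/
private lemma move_lemma {n : α → ℕ} {p : α → ℝ} (hp : p ∈ PBA n)
    {a b : α} (hab : a ≠ b) {δ : ℝ} (hδ : 0 < δ)
    (hbin : ∀ σ, σ ≠ a → σ ≠ b → BinaryVal n σ (p σ))
    (hla : lo n a ≤ p a - δ) (hhb : p b + δ ≤ hi n b)
    (hone : BinaryVal n a (p a - δ) ∨ BinaryVal n b (p b + δ)) :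
    GammaAdj n p (fun σ => if σ = a then p a - δ else if σ = b then p b + δ else p σ) := by
  set p' : α → ℝ := fun σ => if σ = a then p a - δ else if σ = b then p b + δ else p σ with hp'def
  have hpa : p' a = p a - δ := by simp [hp'def]
  have hpb : p' b = p b + δ := by simp [hp'def, hab.symm]
  have hpo : ∀ σ, σ ≠ a → σ ≠ b → p' σ = p σ := by
    intro σ h1 h2; simp [hp'def, h1, h2]
  have hbnds : ∀ σ, lo n σ ≤ p' σ ∧ p' σ ≤ hi n σ := by
    intro σ
    by_cases h1 : σ = a
    · subst h1
      rw [hpa]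
      exact ⟨hla, by have := pba_hi hp σ; linarith⟩
    · by_cases h2 : σ = b
      · subst h2
        rw [hpb]
        exact ⟨by have := pba_lo hp σ; linarith, hhb⟩
      · rw [hpo σ h1 h2]
        exact ⟨pba_lo hp σ, pba_hi hp σ⟩
  have hsum : ∑ σ, p' σ = 1 := by
    have := sum_pair_diff (f := p') (g := p) hab hpo
    rw [hpa, hpb, pba_sum hp] at this
    rw [this]; ring
  have hp'mem : p' ∈ PBA n := by
    refine ⟨⟨⟨fun σ => ?_, hsum⟩, fun σ => hbnds σ⟩, ?_⟩
    · have := (hbnds σ).1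
      have := lo_pos n σ
      linarith
    · intro σ τ hσ hτ
      have hmem : ∀ c : α, ¬ BinaryVal n c (p' c) → c = a ∨ c = b := by
        intro c hc
        by_contra hcc
        push_neg at hcc
        rw [hpo c hcc.1 hcc.2] at hc
        exact hc (hbin c hcc.1 hcc.2)
      have hnot : ¬ (¬ BinaryVal n a (p' a) ∧ ¬ BinaryVal n b (p' b)) := by
        rintro ⟨h1, h2⟩
        rw [hpa] at h1; rw [hpb] at h2
        rcases hone with h | h
        · exact h1 h
        · exact h2 h
      rcases hmem σ hσ with rfl | rfl <;> rcases hmem τ hτ with rfl | rfl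
      · rfl
      · exact absurd ⟨hσ, hτ⟩ hnot
      · exact absurd ⟨hτ, hσ⟩ hnot
      · rfl
  refine ⟨hp, hp'mem, a, b, hab, ?_, hbin, ?_⟩
  · ext σ
    simp only [Set.mem_setOf_eq, Set.mem_insert_iff, Set.mem_singleton_iff]
    constructor
    · intro hne
      by_contra hcc
      push_neg at hcc
      exact hne (hpo σ hcc.1 hcc.2).symm
    · rintro (rfl | rfl)
      · rw [hpa]; intro h; linarith [h]
      · rw [hpb]; intro h; linarith [h]
  · intro σ h1 h2
    rw [hpo σ h1 h2]
    exact hbin σ h1 h2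


private noncomputable def mu (q p : α → ℝ) : ℝ := ∑ σ, |p σ - q σ|

private lemma main_step {n : α → ℕ} {q p : α → ℝ} (hq : q ∈ PBA n) (hp : p ∈ PBA n)
    (hgq : ∀ σ, gr n (q σ)) (hgp : ∀ σ, gr n (p σ))
    {a b : α} (ha : q a < p a) (hb : p b < q b)
    (hbin : ∀ σ, σ ≠ a → σ ≠ b → BinaryVal n σ (p σ)) :
    ∃ p', GammaAdj n p p' ∧ (∀ σ, gr n (p' σ)) ∧
      mu q p' + 2 * (2:ℝ) ^ (-(NN n : ℤ)) ≤ mu q p := by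
  have hab : a ≠ b := by rintro rfl; linarith
  have hla0 : lo n a ≤ q a := pba_lo hq a
  have hhb0 : q b ≤ hi n b := pba_hi hq b
  have hqab : BinaryVal n a (q a) ∨ BinaryVal n b (q b) := by
    by_contra hcc
    push_neg at hcc
    exact hab (hq.2 a b hcc.1 hcc.2)
  have hX : 0 < p a - lo n a := by linarith
  have hY : 0 < hi n b - p b := by linarith
  rcases hqab with hqa | hqb
  · -- land-on-q candidate on the `a` side
    set δ := min (min (p a - lo n a) (hi n b - p b)) (p a - q a) with hδdef
    have hδpos : 0 < δ := lt_min (lt_min hX hY) (by linarith)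
    have hd1 : δ ≤ p a - lo n a := le_trans (min_le_left _ _) (min_le_left _ _)
    have hd2 : δ ≤ hi n b - p b := le_trans (min_le_left _ _) (min_le_right _ _)
    have hd3 : δ ≤ p a - q a := min_le_right _ _
    have hgrδ : gr n δ := gr_min (gr_min (gr_sub (hgp a) (gr_lo n a))
      (gr_sub (gr_hi n b) (hgp b))) (gr_sub (hgp a) (hgq a))
    have hcase : δ = p a - lo n a ∨ δ = hi n b - p b ∨ δ = p a - q a := by
      rcases min_cases (min (p a - lo n a) (hi n b - p b)) (p a - q a) with ⟨h1,_⟩|⟨h1,_⟩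
      · rcases min_cases (p a - lo n a) (hi n b - p b) with ⟨h2,_⟩|⟨h2,_⟩
        · exact Or.inl (by rw [hδdef, h1, h2])
        · exact Or.inr (Or.inl (by rw [hδdef, h1, h2]))
      · exact Or.inr (Or.inr (by rw [hδdef, h1]))
    have hone : BinaryVal n a (p a - δ) ∨ BinaryVal n b (p b + δ) := by
      rcases hcase with h | h | h
      · left; rw [binval_iff]; left; rw [h]; ring
      · right; rw [binval_iff]; right; rw [h]; ring
      · left; have heq : p a - δ = q a := by rw [h]; ring
        rw [heq]; exact hqa
    set p' : α → ℝ := fun σ => if σ = a then p a - δ else if σ = b then p b + δ else p σ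
      with hp'def
    have hadj : GammaAdj n p p' :=
      move_lemma hp hab hδpos hbin (by linarith) (by linarith) hone
    have hp'a : p' a = p a - δ := by simp [hp'def]
    have hp'b : p' b = p b + δ := by simp [hp'def, hab.symm]
    have hp'o : ∀ σ, σ ≠ a → σ ≠ b → p' σ = p σ := by
      intro σ h1 h2; simp [hp'def, h1, h2]
    refine ⟨p', hadj, ?_, ?_⟩
    · intro σ
      by_cases h1 : σ = a
      · rw [h1, hp'a]; exact gr_sub (hgp a) hgrδ
      · by_cases h2 : σ = b
        · rw [h2, hp'b]; exact gr_add (hgp b) hgrδ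
        · rw [hp'o σ h1 h2]; exact hgp σ
    · have hμ : mu q p' = mu q p + ((|p' a - q a| - |p a - q a|) + (|p' b - q b| - |p b - q b|)) := by
        apply sum_pair_diff hab
        intro σ h1 h2
        rw [hp'o σ h1 h2]
      have e1 : |p a - q a| = p a - q a := abs_of_pos (by linarith)
      have e2 : |p b - q b| = q b - p b := by
        rw [abs_of_neg (by linarith)]; ring
      have e3 : |p' a - q a| = p a - q a - δ := by
        rw [hp'a, abs_of_nonneg (by linarith)]; ring
      have e4 : |p' b - q b| ≤ (q b - p b) + δ - 2 * min δ (q b - p b) := by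
        rw [hp'b]
        rcases le_total (p b + δ) (q b) with h | h
        · rw [abs_of_nonpos (by linarith)]
          have := min_le_left δ (q b - p b); linarith
        · rw [abs_of_nonneg (by linarith)]
          have := min_le_right δ (q b - p b); linarith
      have hm : 0 < min δ (q b - p b) := lt_min hδpos (by linarith)
      have hmgr : gr n (min δ (q b - p b)) := gr_min hgrδ (gr_sub (hgq b) (hgp b))
      have hc := gr_ge hmgr hm
      linarith
  · -- land-on-q candidate on the `b` side
    set δ := min (min (p a - lo n a) (hi n b - p b)) (q b - p b) with hδdef
    have hδpos : 0 < δ := lt_min (lt_min hX hY) (by linarith)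
    have hd1 : δ ≤ p a - lo n a := le_trans (min_le_left _ _) (min_le_left _ _)
    have hd2 : δ ≤ hi n b - p b := le_trans (min_le_left _ _) (min_le_right _ _)
    have hd3 : δ ≤ q b - p b := min_le_right _ _
    have hgrδ : gr n δ := gr_min (gr_min (gr_sub (hgp a) (gr_lo n a))
      (gr_sub (gr_hi n b) (hgp b))) (gr_sub (hgq b) (hgp b))
    have hcase : δ = p a - lo n a ∨ δ = hi n b - p b ∨ δ = q b - p b := by
      rcases min_cases (min (p a - lo n a) (hi n b - p b)) (q b - p b) with ⟨h1,_⟩|⟨h1,_⟩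
      · rcases min_cases (p a - lo n a) (hi n b - p b) with ⟨h2,_⟩|⟨h2,_⟩
        · exact Or.inl (by rw [hδdef, h1, h2])
        · exact Or.inr (Or.inl (by rw [hδdef, h1, h2]))
      · exact Or.inr (Or.inr (by rw [hδdef, h1]))
    have hone : BinaryVal n a (p a - δ) ∨ BinaryVal n b (p b + δ) := by
      rcases hcase with h | h | h
      · left; rw [binval_iff]; left; rw [h]; ring
      · right; rw [binval_iff]; right; rw [h]; ring
      · right; have heq : p b + δ = q b := by rw [h]; ring
        rw [heq]; exact hqb
    set p' : α → ℝ := fun σ => if σ = a then p a - δ else if σ = b then p b + δ else p σ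
      with hp'def
    have hadj : GammaAdj n p p' :=
      move_lemma hp hab hδpos hbin (by linarith) (by linarith) hone
    have hp'a : p' a = p a - δ := by simp [hp'def]
    have hp'b : p' b = p b + δ := by simp [hp'def, hab.symm]
    have hp'o : ∀ σ, σ ≠ a → σ ≠ b → p' σ = p σ := by
      intro σ h1 h2; simp [hp'def, h1, h2]
    refine ⟨p', hadj, ?_, ?_⟩
    · intro σ
      by_cases h1 : σ = a
      · rw [h1, hp'a]; exact gr_sub (hgp a) hgrδ
      · by_cases h2 : σ = b
        · rw [h2, hp'b]; exact gr_add (hgp b) hgrδ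
        · rw [hp'o σ h1 h2]; exact hgp σ
    · have hμ : mu q p' = mu q p + ((|p' a - q a| - |p a - q a|) + (|p' b - q b| - |p b - q b|)) := by
        apply sum_pair_diff hab
        intro σ h1 h2
        rw [hp'o σ h1 h2]
      have e1 : |p a - q a| = p a - q a := abs_of_pos (by linarith)
      have e2 : |p b - q b| = q b - p b := by
        rw [abs_of_neg (by linarith)]; ring
      have e3 : |p' b - q b| = q b - p b - δ := by
        rw [hp'b, abs_of_nonpos (by linarith)]; ring
      have e4 : |p' a - q a| ≤ (p a - q a) + δ - 2 * min δ (p a - q a) := by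
        rw [hp'a]
        rcases le_total (p a - δ) (q a) with h | h
        · rw [abs_of_nonpos (by linarith)]
          have := min_le_right δ (p a - q a); linarith
        · rw [abs_of_nonneg (by linarith)]
          have := min_le_left δ (p a - q a); linarith
      have hm : 0 < min δ (p a - q a) := lt_min hδpos (by linarith)
      have hmgr : gr n (min δ (p a - q a)) := gr_min hgrδ (gr_sub (hgp a) (hgq a))
      have hc := gr_ge hmgr hm
      linarith


private noncomputable def phi (n : α → ℕ) (q p : α → ℝ) : ℝ :=
  if ∃ c, p c = q c ∧ ¬ BinaryVal n c (p c) then 1 else 0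

private lemma phi_nonneg (n : α → ℕ) (q p : α → ℝ) : 0 ≤ phi n q p := by
  unfold phi; split <;> norm_num

private lemma phi_le_one (n : α → ℕ) (q p : α → ℝ) : phi n q p ≤ 1 := by
  unfold phi; split <;> norm_num

private noncomputable def MM (n : α → ℕ) (q p : α → ℝ) : ℝ :=
  (2:ℝ) ^ ((NN n : ℤ) + 1) * mu q p + phi n q p

private lemma shared_step {n : α → ℕ} {q p : α → ℝ} (hq : q ∈ PBA n) (hp : p ∈ PBA n)
    (hgq : ∀ σ, gr n (q σ)) (hgp : ∀ σ, gr n (p σ))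
    {ρ a : α} (hρ : p ρ = q ρ) (hρn : ¬ BinaryVal n ρ (p ρ)) (ha : q a < p a) :
    ∃ p', GammaAdj n p p' ∧ (∀ σ, gr n (p' σ)) ∧ MM n q p' + 1 ≤ MM n q p := by
  have haρ : a ≠ ρ := by rintro rfl; rw [hρ] at ha; exact absurd rfl (ne_of_gt ha)
  have hla0 : lo n a ≤ q a := pba_lo hq a
  have hρhi : p ρ < hi n ρ := by
    rcases lt_or_eq_of_le (pba_hi hp ρ) with h | h
    · exact h
    · exact absurd (Or.inr h) hρn
  have hqa : BinaryVal n a (q a) := by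
    by_contra hcc
    have hqρn : ¬ BinaryVal n ρ (q ρ) := by rwa [hρ] at hρn
    exact haρ (hq.2 a ρ hcc hqρn)
  set δ := min (p a - q a) (hi n ρ - p ρ) with hδdef
  have hδpos : 0 < δ := lt_min (by linarith) (by linarith)
  have hd1 : δ ≤ p a - q a := min_le_left _ _
  have hd2 : δ ≤ hi n ρ - p ρ := min_le_right _ _
  have hbin : ∀ σ, σ ≠ a → σ ≠ ρ → BinaryVal n σ (p σ) := by
    intro σ h1 h2
    by_contra hcc
    exact h2 (hp.2 σ ρ hcc hρn)
  have hone : BinaryVal n a (p a - δ) ∨ BinaryVal n ρ (p ρ + δ) := by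
    rcases min_cases (p a - q a) (hi n ρ - p ρ) with ⟨h1, _⟩ | ⟨h1, _⟩
    · left
      have heq : p a - δ = q a := by rw [hδdef, h1]; ring
      rw [heq]; exact hqa
    · right; rw [binval_iff]; right; rw [hδdef, h1]; ring
  set p' : α → ℝ := fun σ => if σ = a then p a - δ else if σ = ρ then p ρ + δ else p σ
    with hp'def
  have hadj : GammaAdj n p p' :=
    move_lemma hp haρ hδpos hbin (by linarith) (by linarith) hone
  have hp'a : p' a = p a - δ := by simp [hp'def]
  have hp'ρ : p' ρ = p ρ + δ := by simp [hp'def, haρ.symm]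
  have hp'o : ∀ σ, σ ≠ a → σ ≠ ρ → p' σ = p σ := by
    intro σ h1 h2; simp [hp'def, h1, h2]
  have hgrδ : gr n δ := gr_min (gr_sub (hgp a) (hgq a)) (gr_sub (gr_hi n ρ) (hgp ρ))
  refine ⟨p', hadj, ?_, ?_⟩
  · intro σ
    by_cases h1 : σ = a
    · rw [h1, hp'a]; exact gr_sub (hgp a) hgrδ
    · by_cases h2 : σ = ρ
      · rw [h2, hp'ρ]; exact gr_add (hgp ρ) hgrδ
      · rw [hp'o σ h1 h2]; exact hgp σ
  · have hμ : mu q p' = mu q p + ((|p' a - q a| - |p a - q a|) + (|p' ρ - q ρ| - |p ρ - q ρ|)) := by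
      apply sum_pair_diff haρ
      intro σ h1 h2
      rw [hp'o σ h1 h2]
    have e1 : |p a - q a| = p a - q a := abs_of_pos (by linarith)
    have e2 : |p ρ - q ρ| = 0 := by rw [hρ]; simp
    have e3 : |p' a - q a| = p a - q a - δ := by
      rw [hp'a, abs_of_nonneg (by linarith)]; ring
    have e4 : |p' ρ - q ρ| = δ := by
      rw [hp'ρ, hρ, abs_of_nonneg (by linarith)]; ring
    have hμeq : mu q p' = mu q p := by rw [hμ, e1, e2, e3, e4]; ring
    have hφp : phi n q p = 1 := by
      unfold phi
      rw [if_pos ⟨ρ, hρ, hρn⟩]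
    have hφp' : phi n q p' = 0 := by
      unfold phi
      rw [if_neg]
      rintro ⟨c, hc1, hc2⟩
      by_cases h1 : c = a
      · subst h1
        rw [hp'a] at hc1 hc2
        rw [hc1] at hc2
        exact hc2 hqa
      · by_cases h2 : c = ρ
        · subst h2
          rw [hp'ρ, hρ] at hc1
          linarith
        · rw [hp'o c h1 h2] at hc1 hc2
          exact h2 (hp.2 c ρ (fun hb => hc2 hb) hρn)
    unfold MM
    rw [hμeq, hφp, hφp']
    linarith


private lemma MM_of_mu {n : α → ℕ} {q p p' : α → ℝ}
    (h : mu q p' + 2 * (2:ℝ) ^ (-(NN n : ℤ)) ≤ mu q p) :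
    MM n q p' + 1 ≤ MM n q p := by
  set S := (2:ℝ) ^ ((NN n : ℤ) + 1) with hSdef
  set c := (2:ℝ) ^ (-(NN n : ℤ)) with hcdef
  have hS : (0:ℝ) < S := zpow_pos (by norm_num) _
  have hSc : S * c = 2 := by
    rw [hSdef, hcdef, ← zpow_add₀ (by norm_num : (2:ℝ) ≠ 0),
      show (NN n : ℤ) + 1 + -(NN n : ℤ) = 1 by ring]
    norm_num
  have hmul := mul_le_mul_of_nonneg_left h (le_of_lt hS)
  have hexp : S * (mu q p' + 2 * c) = S * mu q p' + 2 * (S * c) := by ring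
  rw [hexp, hSc] at hmul
  unfold MM
  have h1 := phi_nonneg n q p
  have h2 := phi_le_one n q p'
  linarith

private lemma step_lemma {n : α → ℕ} {q p : α → ℝ} (hq : q ∈ PBA n) (hp : p ∈ PBA n)
    (hgq : ∀ σ, gr n (q σ)) (hgp : ∀ σ, gr n (p σ)) (hne : p ≠ q) :
    ∃ p', GammaAdj n p p' ∧ (∀ σ, gr n (p' σ)) ∧ MM n q p' + 1 ≤ MM n q p := by
  have hsums : ∑ σ, p σ = ∑ σ, q σ := by rw [pba_sum hp, pba_sum hq]
  have hex_a : ∃ a, q a < p a := by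
    by_contra h
    push_neg at h
    apply hne
    funext σ
    exact (Finset.sum_eq_sum_iff_of_le (fun i _ => h i)).1 hsums σ (Finset.mem_univ σ)
  obtain ⟨a, ha⟩ := hex_a
  have hex_b : ∃ b, p b < q b := by
    by_contra h
    push_neg at h
    have : ∑ σ, q σ < ∑ σ, p σ :=
      Finset.sum_lt_sum (fun i _ => h i) ⟨a, Finset.mem_univ a, ha⟩
    linarith
  by_cases hirr : ∃ ρ, ¬ BinaryVal n ρ (p ρ)
  · obtain ⟨ρ, hρn⟩ := hirr
    have hbinρ : ∀ σ, σ ≠ ρ → BinaryVal n σ (p σ) := by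
      intro σ h1
      by_contra hcc
      exact h1 (hp.2 σ ρ hcc hρn)
    by_cases hρq : p ρ = q ρ
    · exact shared_step hq hp hgq hgp hρq hρn ha
    · rcases lt_or_gt_of_ne hρq with h | h
      · obtain ⟨p', h1, h2, h3⟩ := main_step hq hp hgq hgp ha h
          (fun σ hσ1 hσ2 => hbinρ σ hσ2)
        exact ⟨p', h1, h2, MM_of_mu h3⟩
      · obtain ⟨b, hb⟩ := hex_b
        obtain ⟨p', h1, h2, h3⟩ := main_step hq hp hgq hgp h hb
          (fun σ hσ1 hσ2 => hbinρ σ hσ1)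
        exact ⟨p', h1, h2, MM_of_mu h3⟩
  · push_neg at hirr
    obtain ⟨b, hb⟩ := hex_b
    obtain ⟨p', h1, h2, h3⟩ := main_step hq hp hgq hgp ha hb (fun σ _ _ => hirr σ)
    exact ⟨p', h1, h2, MM_of_mu h3⟩

private lemma reach {n : α → ℕ} {q : α → ℝ} (hq : q ∈ PBA n) (hgq : ∀ σ, gr n (q σ)) :
    ∀ k : ℕ, ∀ p : α → ℝ, p ∈ PBA n → (∀ σ, gr n (p σ)) → MM n q p ≤ k →
      Relation.ReflTransGen (GammaAdj n) p q := by
  intro k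
  induction k with
  | zero =>
    intro p hp hgp hM
    by_cases h : p = q
    · rw [h]
    · exfalso
      obtain ⟨σ0, hσ0⟩ : ∃ σ0, p σ0 ≠ q σ0 := by
        by_contra hc
        push_neg at hc
        exact h (funext hc)
      have hpos : 0 < mu q p := by
        have h1 : 0 < |p σ0 - q σ0| := abs_pos.2 (sub_ne_zero.2 hσ0)
        have h2 : |p σ0 - q σ0| ≤ mu q p :=
          Finset.single_le_sum (f := fun σ => |p σ - q σ|)
            (fun i _ => abs_nonneg _) (Finset.mem_univ σ0)
        linarith
      have hS : (0:ℝ) < (2:ℝ) ^ ((NN n : ℤ) + 1) := zpow_pos (by norm_num) _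
      have := phi_nonneg n q p
      unfold MM at hM
      push_cast at hM
      nlinarith
  | succ k ih =>
    intro p hp hgp hM
    by_cases h : p = q
    · rw [h]
    · obtain ⟨p', hadj, hg', hM'⟩ := step_lemma hq hp hgq hgp h
      refine Relation.ReflTransGen.head hadj (ih p' hadj.2.1 hg' ?_)
      push_cast at hM ⊢
      linarith

end GammaProof



/-- **Claim.** The graph `Γ_n` is connected: any two vertices of `PBA_n` are joined by a path. -/
theorem Gamma_connected {α : Type*} [Fintype α] (n : α → ℕ) (hn : ∀ σ, 1 ≤ n σ)
    (p q : α → ℝ) (hp : p ∈ PBA n) (hq : q ∈ PBA n) :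
    Relation.ReflTransGen (GammaAdj n) p q := by
  exact reach hq (pba_grid hq) ⌈MM n q p⌉₊ p hp (pba_grid hp) (Nat.le_ceil _)
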